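/- arXiv:1804.07382 — 2 statements merged into one kernel-verified Lean document; each statement's English description precedes it below -/
import Mathlib

section
/- Let Ā ∈ ℝ^{n×n} and C̄ ∈ ℝ^{p×n}. If P ∈ ℝ^{n×n} is positive semidefinite and satisfies the strict Lyapunov inequality ĀᵀP + PĀ + C̄ᵀC̄ < 0, then P is positive definite and Ā is Hurwitz. -/
open Matrix Filter

/-- Matrix exponential over the reals. -/
noncomputable def mexp {ι : Type*} [Fintype ι] [DecidableEq ι]
    (A : Matrix ι ι ℝ) : Matrix ι ι ℝ :=
  NormedSpace.exp A

/-- A real square matrix is Hurwitz if every complex eigenvalue has negative real part. -/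
def IsHurwitz {ι : Type*} [Fintype ι] [DecidableEq ι] (A : Matrix ι ι ℝ) : Prop :=
  ∀ μ ∈ spectrum ℂ (A.map (algebraMap ℝ ℂ)), μ.re < 0

/-- `M < 0` : `M` is symmetric negative definite. -/
def NegDef {ι : Type*} [Fintype ι] (M : Matrix ι ι ℝ) : Prop := (-M).PosDef

open scoped ComplexOrder

private lemma conjTranspose_map_complex {m n : ℕ} (M : Matrix (Fin m) (Fin n) ℝ) :
    (Mᵀ).map (algebraMap ℝ ℂ) = (M.map (algebraMap ℝ ℂ))ᴴ := by
  rw [← conjTranspose_eq_transpose_of_trivial, Matrix.conjTranspose_map]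
  intro a
  simp

private lemma posSemidef_map_complex {n : ℕ} {M : Matrix (Fin n) (Fin n) ℝ}
    (hM : M.PosSemidef) : (M.map (algebraMap ℝ ℂ)).PosSemidef := by
  obtain ⟨B, rfl⟩ : ∃ B : Matrix (Fin n) (Fin n) ℝ, M = Bᴴ * B := by
    open scoped MatrixOrder in exact CStarAlgebra.nonneg_iff_eq_star_mul_self.mp hM.nonneg
  rw [Matrix.map_mul (f := algebraMap ℝ ℂ)]
  rw [conjTranspose_eq_transpose_of_trivial, conjTranspose_map_complex]
  exact posSemidef_conjTranspose_mul_self _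

private lemma exists_eigenvector_complex {n : ℕ} (M : Matrix (Fin n) (Fin n) ℂ) (μ : ℂ)
    (h : μ ∈ spectrum ℂ M) : ∃ v : Fin n → ℂ, v ≠ 0 ∧ M *ᵥ v = μ • v := by
  rw [← AlgEquiv.spectrum_eq (Matrix.toLinAlgEquiv'),
    ← Module.End.hasEigenvalue_iff_mem_spectrum] at h
  obtain ⟨v, hv⟩ := h.exists_hasEigenvector
  exact ⟨v, hv.2, by
    simpa [Matrix.toLinAlgEquiv'_apply, Matrix.toLin'_apply] using hv.apply_eq_smul⟩

theorem stmt3 {n p : ℕ}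
    (A : Matrix (Fin n) (Fin n) ℝ) (C : Matrix (Fin p) (Fin n) ℝ)
    (P : Matrix (Fin n) (Fin n) ℝ) (hP : P.PosSemidef)
    (hLyap : NegDef (Aᵀ * P + P * A + Cᵀ * C)) :
    P.PosDef ∧ IsHurwitz A := by
  set S := Aᵀ * P + P * A + Cᵀ * C with hS
  have hQ : (-S).PosDef := hLyap
  have hPT : Pᵀ = P := by
    rw [← conjTranspose_eq_transpose_of_trivial]; exact hP.isHermitian
  -- Part 1: P is positive definite
  have hPd : P.PosDef := by
    refine PosDef.of_dotProduct_mulVec_pos hP.isHermitian (fun x hx => ?_)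
    rcases lt_or_eq_of_le (hP.dotProduct_mulVec_nonneg x) with h | h
    · exact h
    · exfalso
      have hPx : P *ᵥ x = 0 := (hP.dotProduct_mulVec_zero_iff x).mp h.symm
      have h1 := hQ.dotProduct_mulVec_pos hx
      have e1 : star x ⬝ᵥ ((Aᵀ * P) *ᵥ x) = 0 := by
        rw [← mulVec_mulVec, hPx, mulVec_zero, dotProduct_zero]
      have e2 : star x ⬝ᵥ ((P * A) *ᵥ x) = 0 := by
        rw [← mulVec_mulVec, dotProduct_mulVec, ← mulVec_transpose, hPT]
        have : P *ᵥ star x = 0 := by simpa using hPx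
        rw [this, zero_dotProduct]
      have e3 : 0 ≤ star x ⬝ᵥ ((Cᵀ * C) *ᵥ x) := by
        rw [← mulVec_mulVec, dotProduct_mulVec, ← mulVec_transpose, transpose_transpose]
        have : C *ᵥ star x = C *ᵥ x := by simp
        rw [this]
        exact Fintype.sum_nonneg fun i => mul_self_nonneg _
      rw [neg_mulVec, dotProduct_neg, hS, add_mulVec, add_mulVec, dotProduct_add,
        dotProduct_add, e1, e2] at h1
      linarith
  refine ⟨hPd, fun μ hμ => ?_⟩
  -- Part 2: Hurwitz
  set f := algebraMap ℝ ℂ with hf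
  set B := A.map f with hB
  set Pc := P.map f with hPc
  set Cc := C.map f with hCc
  obtain ⟨v, hv0, hv⟩ := exists_eigenvector_complex B μ hμ
  have hPcsd : Pc.PosSemidef := posSemidef_map_complex hP
  have hQc : ((-S).map f).PosSemidef := posSemidef_map_complex hQ.posSemidef
  set r := star v ⬝ᵥ (Pc *ᵥ v) with hrdef
  set q := star v ⬝ᵥ (((-S).map f) *ᵥ v) with hqdef
  set c := star (Cc *ᵥ v) ⬝ᵥ (Cc *ᵥ v) with hcdef
  have hr : 0 ≤ r := hPcsd.dotProduct_mulVec_nonneg v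
  have hq : 0 ≤ q := hQc.dotProduct_mulVec_nonneg v
  have hqne : q ≠ 0 := by
    intro h
    have h0 : ((-S).map f) *ᵥ v = 0 := (hQc.dotProduct_mulVec_zero_iff v).mp h
    have hdet : IsUnit ((-S).map f).det := by
      rw [← RingHom.mapMatrix_apply, ← RingHom.map_det]
      exact (isUnit_iff_ne_zero).mpr (by
        simpa using (ne_of_gt hQ.det_pos))
    have hinj : Function.Injective (((-S).map f).mulVec) :=
      Matrix.mulVec_injective_iff_isUnit.mpr ((Matrix.isUnit_iff_isUnit_det _).mpr hdet)
    exact hv0 (hinj (by simpa using h0))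
  -- expand the Lyapunov quantity over ℂ
  have hmap : S.map f = Bᴴ * Pc + Pc * B + Ccᴴ * Cc := by
    rw [hS, Matrix.map_add _ (fun _ _ => map_add f _ _), Matrix.map_add _ (fun _ _ => map_add f _ _), Matrix.map_mul, Matrix.map_mul, Matrix.map_mul,
      conjTranspose_map_complex, conjTranspose_map_complex]
  have t1 : star v ⬝ᵥ ((Bᴴ * Pc) *ᵥ v) = star μ * r := by
    rw [← mulVec_mulVec, dotProduct_mulVec, ← star_mulVec, hv, star_smul, smul_dotProduct,
      smul_eq_mul]
  have t2 : star v ⬝ᵥ ((Pc * B) *ᵥ v) = μ * r := by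
    rw [← mulVec_mulVec, hv, mulVec_smul, dotProduct_smul, smul_eq_mul, hrdef]
  have t3 : star v ⬝ᵥ ((Ccᴴ * Cc) *ᵥ v) = c := by
    rw [← mulVec_mulVec, dotProduct_mulVec, ← star_mulVec, hcdef]
  have key : q = -(star μ * r + μ * r + c) := by
    have hneg : (-S).map f = -(S.map f) := by
      ext i j; simp
    rw [hqdef, hneg, neg_mulVec, dotProduct_neg, hmap, add_mulVec, add_mulVec,
      dotProduct_add, dotProduct_add, t1, t2, t3]
  -- pass to real parts
  have hrim : r.im = 0 := ((Complex.le_def.mp hr).2).symm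
  have hrre : 0 ≤ r.re := (Complex.le_def.mp hr).1
  have hcre : 0 ≤ c.re := (Complex.le_def.mp (dotProduct_star_self_nonneg (Cc *ᵥ v))).1
  have hqre : 0 < q.re := by
    rcases lt_or_eq_of_le (Complex.le_def.mp hq).1 with h | h
    · exact h
    · exact absurd (Complex.ext h.symm ((Complex.le_def.mp hq).2).symm) hqne
  have hre := congrArg Complex.re key
  simp only [Complex.neg_re, Complex.add_re, Complex.mul_re, Complex.conj_re, Complex.conj_im,
    RCLike.star_def, hrim, mul_zero, neg_mul, sub_zero, neg_zero, add_zero, zero_mul,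
    sub_neg_eq_add] at hre
  nlinarith [hre, hqre, hrre, hcre]
end

section
/- Let A ∈ ℝ^{n×n}, B ∈ ℝ^{n×m} with (A,B) stabilizable, let α < 0 be a real number, and let Q ∈ ℝ^{n×n} be positive semidefinite. Then there exists a positive semidefinite matrix P ∈ ℝ^{n×n} satisfying the strict Riccati inequality AᵀP + PA + αPBBᵀP + Q < 0. -/
open Matrix Filter

attribute [local instance] Matrix.linftyOpNormedAddCommGroup Matrix.linftyOpNormedSpace
  Matrix.linftyOpNormedRing Matrix.linftyOpNormedAlgebra

lemma mexp_hasDerivAt {N : ℕ} (A : Matrix (Fin N) (Fin N) ℝ) (t : ℝ) :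
    HasDerivAt (fun s : ℝ => mexp (s • A)) (A * mexp (t • A)) t :=
  hasDerivAt_exp_smul_const' A t

lemma mexp_hasDerivAt' {N : ℕ} (A : Matrix (Fin N) (Fin N) ℝ) (t : ℝ) :
    HasDerivAt (fun s : ℝ => mexp (s • A)) (mexp (t • A) * A) t :=
  hasDerivAt_exp_smul_const A t

lemma mexp_continuous {N : ℕ} (A : Matrix (Fin N) (Fin N) ℝ) :
    Continuous (fun s : ℝ => mexp (s • A)) :=
  continuous_iff_continuousAt.2 fun t => (mexp_hasDerivAt A t).continuousAt

variable {N : ℕ}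

lemma mexp_transpose (A : Matrix (Fin N) (Fin N) ℝ) (t : ℝ) :
    mexp (t • Aᵀ) = (mexp (t • A))ᵀ := by
  rw [mexp, mexp, ← transpose_smul, Matrix.exp_transpose]

noncomputable def lyap (A : Matrix (Fin N) (Fin N) ℝ) (T : ℝ) : Matrix (Fin N) (Fin N) ℝ :=
  ∫ t in (0:ℝ)..T, mexp (t • Aᵀ) * mexp (t • A)

lemma lyap_eq (A : Matrix (Fin N) (Fin N) ℝ) (T : ℝ) :
    Aᵀ * lyap A T + lyap A T * A = mexp (T • Aᵀ) * mexp (T • A) - 1 := by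
  set g : ℝ → Matrix (Fin N) (Fin N) ℝ := fun t => mexp (t • Aᵀ) * mexp (t • A) with hgdef
  have hgc : Continuous g := (mexp_continuous Aᵀ).mul (mexp_continuous A)
  have hg : ∀ t : ℝ, HasDerivAt g (Aᵀ * g t + g t * A) t := by
    intro t
    have h := (mexp_hasDerivAt Aᵀ t).mul (mexp_hasDerivAt' A t)
    rw [show Aᵀ * g t + g t * A = Aᵀ * mexp (t • Aᵀ) * mexp (t • A) + mexp (t • Aᵀ) * (mexp (t • A) * A) by
      simp [hgdef, mul_assoc]]
    exact h
  have hc1 : Continuous fun t => Aᵀ * g t := continuous_const.mul hgc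
  have hc2 : Continuous fun t => g t * A := hgc.mul continuous_const
  have key := intervalIntegral.integral_eq_sub_of_hasDerivAt
    (f := g) (f' := fun t => Aᵀ * g t + g t * A) (a := 0) (b := T)
    (fun t _ => hg t) ((hc1.add hc2).intervalIntegrable 0 T)
  rw [intervalIntegral.integral_add (hc1.intervalIntegrable 0 T) (hc2.intervalIntegrable 0 T)] at key
  have e1 : ∫ t in (0:ℝ)..T, Aᵀ * g t = Aᵀ * lyap A T := by
    have := ContinuousLinearMap.intervalIntegral_comp_comm
      (μ := MeasureTheory.volume) (a := 0) (b := T) (f := g)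
      (ContinuousLinearMap.mul ℝ (Matrix (Fin N) (Fin N) ℝ) Aᵀ) (hgc.intervalIntegrable 0 T)
    simpa [lyap] using this
  have e2 : ∫ t in (0:ℝ)..T, g t * A = lyap A T * A := by
    have := ContinuousLinearMap.intervalIntegral_comp_comm
      (μ := MeasureTheory.volume) (a := 0) (b := T) (f := g)
      ((ContinuousLinearMap.mul ℝ (Matrix (Fin N) (Fin N) ℝ)).flip A) (hgc.intervalIntegrable 0 T)
    simpa [lyap] using this
  rw [e1, e2] at key
  have hg0 : g 0 = 1 := by simp [hgdef, mexp, NormedSpace.exp_zero]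
  rw [key, hg0]


lemma aux_pow_exp {c : ℝ} (hc : c < 0) (k : ℕ) :
    Tendsto (fun t : ℝ => t ^ k * Real.exp (c * t)) atTop (nhds 0) := by
  have h1 : Tendsto (fun t : ℝ => (-c) * t) atTop atTop :=
    Tendsto.const_mul_atTop (by linarith) tendsto_id
  have h2 := (Real.tendsto_pow_mul_exp_neg_atTop_nhds_zero k).comp h1
  have h3 := h2.const_mul (((-c) ^ k)⁻¹)
  rw [mul_zero] at h3
  refine h3.congr fun t => ?_
  have hck : ((-c) ^ k) ≠ 0 := pow_ne_zero _ (by linarith)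
  simp only [Function.comp_apply, mul_pow, neg_mul, neg_neg]
  field_simp
  ring_nf

noncomputable def mvCLM {N : ℕ} (v : Fin N → ℂ) :
    Matrix (Fin N) (Fin N) ℂ →L[ℂ] (Fin N → ℂ) :=
  LinearMap.toContinuousLinearMap
    { toFun := fun M => M *ᵥ v
      map_add' := fun M P => Matrix.add_mulVec M P v
      map_smul' := fun c M => Matrix.smul_mulVec c M v }

lemma tendsto_cexp_mulVec {N : ℕ} (A : Matrix (Fin N) (Fin N) ℂ)
    (hA : ∀ μ ∈ spectrum ℂ A, μ.re < 0) (v : Fin N → ℂ) :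
    Tendsto (fun t : ℝ => NormedSpace.exp ((t : ℂ) • A) *ᵥ v) atTop (nhds 0) := by
  set f : Module.End ℂ (Fin N → ℂ) := Matrix.toLinAlgEquiv' A with hf
  have hv : v ∈ ⨆ μ, f.maxGenEigenspace μ := by
    rw [Module.End.iSup_maxGenEigenspace_eq_top]; trivial
  refine Submodule.iSup_induction (motive := fun w =>
      Tendsto (fun t : ℝ => NormedSpace.exp ((t : ℂ) • A) *ᵥ w) atTop (nhds 0))
      _ hv ?_ (by simp) ?_
  · -- each generalized eigenspace
    intro μ w hw
    by_cases hw0 : w = 0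
    · simp [hw0]
    obtain ⟨K, hK⟩ := (Module.End.mem_maxGenEigenspace f μ w).mp hw
    have hwK : w ∈ f.genEigenspace μ (K : ℕ∞) :=
      Module.End.mem_genEigenspace_nat.mpr hK
    have hμspec : μ ∈ spectrum ℂ A := by
      have hgen : f.HasGenEigenvalue μ K :=
        (Submodule.ne_bot_iff _).mpr ⟨w, hwK, hw0⟩
      have := (Module.End.hasEigenvalue_of_hasGenEigenvalue hgen).mem_spectrum
      rwa [hf, AlgEquiv.spectrum_eq (Matrix.toLinAlgEquiv' (R := ℂ) (n := Fin N)) A] at this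
    have hμ : μ.re < 0 := hA μ hμspec
    set Nm : Matrix (Fin N) (Fin N) ℂ := A - μ • 1 with hNm
    have h1 : f - μ • 1 = Matrix.toLinAlgEquiv' Nm := by
      rw [hNm]; simp only [map_sub, _root_.map_smul, _root_.map_one, hf]
    have h2 : Nm ^ K *ᵥ w = 0 := by
      rw [← Matrix.toLinAlgEquiv'_apply, map_pow, ← h1]; exact hK
    have hz : ∀ k, K ≤ k → Nm ^ k *ᵥ w = 0 := fun k hk => by
      rw [← Nat.sub_add_cancel hk, pow_add, ← Matrix.mulVec_mulVec, h2, Matrix.mulVec_zero]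
    have hform : ∀ t : ℝ, NormedSpace.exp ((t : ℂ) • A) *ᵥ w
        = Complex.exp (t * μ) • ∑ k ∈ Finset.range K,
            (((k.factorial : ℂ))⁻¹ * (t : ℂ) ^ k) • (Nm ^ k *ᵥ w) := by
      intro t
      have hsplit : (t : ℂ) • A = ((t : ℂ) * μ) • (1 : Matrix (Fin N) (Fin N) ℂ)
          + (t : ℂ) • Nm := by
        rw [hNm]; module
      have hcomm : Commute (((t : ℂ) * μ) • (1 : Matrix (Fin N) (Fin N) ℂ)) ((t : ℂ) • Nm) :=
        ((Commute.one_left _).smul_left _).smul_right _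
      rw [hsplit, Matrix.exp_add_of_commute _ _ hcomm]
      have hsc : NormedSpace.exp (((t : ℂ) * μ) • (1 : Matrix (Fin N) (Fin N) ℂ))
          = Complex.exp (t * μ) • (1 : Matrix (Fin N) (Fin N) ℂ) := by
        rw [Complex.exp_eq_exp_ℂ, ← Algebra.algebraMap_eq_smul_one, ← Algebra.algebraMap_eq_smul_one]
        exact (NormedSpace.algebraMap_exp_comm _).symm
      rw [hsc, smul_mul_assoc, one_mul, Matrix.smul_mulVec]
      congr 1
      have hsum := NormedSpace.expSeries_summable' (𝕂 := ℂ) ((t : ℂ) • Nm)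
      have hmv : NormedSpace.exp ((t : ℂ) • Nm) *ᵥ w
          = ∑' k : ℕ, mvCLM w ((k.factorial : ℂ)⁻¹ • ((t : ℂ) • Nm) ^ k) := by
        rw [NormedSpace.exp_eq_tsum ℂ, ← (mvCLM w).map_tsum hsum]; rfl
      rw [hmv, tsum_eq_sum (s := Finset.range K) (fun k hk => ?_)]
      · refine Finset.sum_congr rfl fun k _ => ?_
        show ((k.factorial : ℂ)⁻¹ • ((t : ℂ) • Nm) ^ k) *ᵥ w = _
        rw [smul_pow, Matrix.smul_mulVec, Matrix.smul_mulVec, smul_smul]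
      · show ((k.factorial : ℂ)⁻¹ • ((t : ℂ) • Nm) ^ k) *ᵥ w = 0
        rw [smul_pow, Matrix.smul_mulVec, Matrix.smul_mulVec,
          hz k (by simpa using hk), smul_zero, smul_zero]
    -- squeeze
    have hb : ∀ᶠ t : ℝ in atTop, ‖NormedSpace.exp ((t : ℂ) • A) *ᵥ w‖
        ≤ ∑ k ∈ Finset.range K,
            (t ^ k * Real.exp (μ.re * t)) * ((k.factorial : ℝ)⁻¹ * ‖Nm ^ k *ᵥ w‖) := by
      filter_upwards [eventually_ge_atTop (0 : ℝ)] with t ht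
      rw [hform t, norm_smul]
      have he : ‖Complex.exp (↑t * μ)‖ = Real.exp (μ.re * t) := by
        rw [Complex.norm_exp]
        congr 1
        simp [Complex.mul_re, mul_comm]
      calc ‖Complex.exp (↑t * μ)‖ * ‖∑ k ∈ Finset.range K,
              (((k.factorial : ℂ))⁻¹ * (t : ℂ) ^ k) • (Nm ^ k *ᵥ w)‖
          ≤ ‖Complex.exp (↑t * μ)‖ * ∑ k ∈ Finset.range K,
              ‖(((k.factorial : ℂ))⁻¹ * (t : ℂ) ^ k) • (Nm ^ k *ᵥ w)‖ :=
            mul_le_mul_of_nonneg_left (norm_sum_le _ _) (norm_nonneg _)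
        _ = ∑ k ∈ Finset.range K,
              (t ^ k * Real.exp (μ.re * t)) * ((k.factorial : ℝ)⁻¹ * ‖Nm ^ k *ᵥ w‖) := by
            rw [Finset.mul_sum]
            refine Finset.sum_congr rfl fun k _ => ?_
            rw [norm_smul, norm_mul, norm_inv, norm_pow, he]
            simp only [Complex.norm_natCast, Complex.norm_real, Real.norm_eq_abs,
              Complex.norm_ofNat]
            rw [abs_of_nonneg ht]
            ring
    have htends : Tendsto (fun t : ℝ => ∑ k ∈ Finset.range K,
        (t ^ k * Real.exp (μ.re * t)) * ((k.factorial : ℝ)⁻¹ * ‖Nm ^ k *ᵥ w‖)) atTop (nhds 0) := by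
      have := tendsto_finset_sum (Finset.range K)
        (fun k _ => (aux_pow_exp hμ k).mul_const ((k.factorial : ℝ)⁻¹ * ‖Nm ^ k *ᵥ w‖))
      simpa using this
    exact squeeze_zero_norm' hb htends
  · intro x y hx hy
    have h := hx.add hy
    rw [add_zero] at h
    exact h.congr fun t => (Matrix.mulVec_add _ _ _).symm

section Chunk3
variable {N : ℕ}


noncomputable def qfCLM (x : Fin N → ℝ) : Matrix (Fin N) (Fin N) ℝ →L[ℝ] ℝ :=
  LinearMap.toContinuousLinearMap
    { toFun := fun M => x ⬝ᵥ (M *ᵥ x)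
      map_add' := fun M P => by
        show x ⬝ᵥ ((M + P) *ᵥ x) = x ⬝ᵥ (M *ᵥ x) + x ⬝ᵥ (P *ᵥ x)
        rw [Matrix.add_mulVec, dotProduct_add]
      map_smul' := fun c M => by
        show x ⬝ᵥ ((c • M) *ᵥ x) = c • (x ⬝ᵥ (M *ᵥ x))
        rw [Matrix.smul_mulVec, dotProduct_smul] }

noncomputable def trCLM : Matrix (Fin N) (Fin N) ℝ →L[ℝ] Matrix (Fin N) (Fin N) ℝ :=
  LinearMap.toContinuousLinearMap
    { toFun := fun M => Mᵀ
      map_add' := fun M P => Matrix.transpose_add M P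
      map_smul' := fun c M => Matrix.transpose_smul c M }

lemma quad_g (A : Matrix (Fin N) (Fin N) ℝ) (t : ℝ) (x : Fin N → ℝ) :
    x ⬝ᵥ ((mexp (t • Aᵀ) * mexp (t • A)) *ᵥ x)
      = (mexp (t • A) *ᵥ x) ⬝ᵥ (mexp (t • A) *ᵥ x) := by
  rw [← Matrix.mulVec_mulVec, mexp_transpose, Matrix.dotProduct_mulVec,
    Matrix.vecMul_transpose]

lemma lyap_quad (A : Matrix (Fin N) (Fin N) ℝ) (T : ℝ) (x : Fin N → ℝ) :
    x ⬝ᵥ (lyap A T *ᵥ x)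
      = ∫ t in (0:ℝ)..T, (mexp (t • A) *ᵥ x) ⬝ᵥ (mexp (t • A) *ᵥ x) := by
  have hgc : Continuous fun t : ℝ => mexp (t • Aᵀ) * mexp (t • A) :=
    (mexp_continuous Aᵀ).mul (mexp_continuous A)
  have h := ContinuousLinearMap.intervalIntegral_comp_comm
    (μ := MeasureTheory.volume) (a := 0) (b := T) (qfCLM x) (hgc.intervalIntegrable 0 T)
  have hq : ∀ M : Matrix (Fin N) (Fin N) ℝ, qfCLM x M = x ⬝ᵥ (M *ᵥ x) := fun _ => rfl
  show qfCLM x (∫ t in (0:ℝ)..T, mexp (t • Aᵀ) * mexp (t • A)) = _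
  refine h.symm.trans ?_
  exact intervalIntegral.integral_congr fun t _ => quad_g A t x

lemma lyap_quad_nonneg (A : Matrix (Fin N) (Fin N) ℝ) {T : ℝ} (hT : 0 ≤ T) (x : Fin N → ℝ) :
    0 ≤ x ⬝ᵥ (lyap A T *ᵥ x) := by
  rw [lyap_quad]
  refine intervalIntegral.integral_nonneg hT fun t _ => ?_
  exact Finset.sum_nonneg fun i _ => mul_self_nonneg _

lemma lyap_symm (A : Matrix (Fin N) (Fin N) ℝ) (T : ℝ) : (lyap A T)ᵀ = lyap A T := by
  have hgc : Continuous fun t : ℝ => mexp (t • Aᵀ) * mexp (t • A) :=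
    (mexp_continuous Aᵀ).mul (mexp_continuous A)
  have h := ContinuousLinearMap.intervalIntegral_comp_comm
    (μ := MeasureTheory.volume) (a := 0) (b := T) (trCLM) (hgc.intervalIntegrable 0 T)
  show trCLM (∫ t in (0:ℝ)..T, mexp (t • Aᵀ) * mexp (t • A)) = lyap A T
  refine h.symm.trans ?_
  show _ = (∫ t in (0:ℝ)..T, mexp (t • Aᵀ) * mexp (t • A))
  refine intervalIntegral.integral_congr fun t _ => ?_
  show (mexp (t • Aᵀ) * mexp (t • A))ᵀ = _
  rw [transpose_mul, mexp_transpose, transpose_transpose, ← mexp_transpose]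

end Chunk3

section Chunk4
variable {N : ℕ}
lemma mexp_map_complex (A : Matrix (Fin N) (Fin N) ℝ) (t : ℝ) :
    (mexp (t • A)).map (algebraMap ℝ ℂ)
      = NormedSpace.exp ((t : ℂ) • A.map (algebraMap ℝ ℂ)) := by
  set φ : Matrix (Fin N) (Fin N) ℝ →ₐ[ℝ] Matrix (Fin N) (Fin N) ℂ :=
    (Algebra.ofId ℝ ℂ).mapMatrix with hφ
  have hφc : Continuous φ := φ.toLinearMap.continuous_of_finiteDimensional
  have h1 := NormedSpace.map_exp φ hφc (t • A)
  have h2 : φ (t • A) = (t : ℂ) • A.map (algebraMap ℝ ℂ) := by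
    ext i j
    simp only [hφ, AlgHom.mapMatrix_apply, Matrix.map_apply, Matrix.smul_apply,
      smul_eq_mul, Complex.real_smul]
    rw [show ((Algebra.ofId ℝ ℂ)) (t * A i j) = ((t * A i j : ℝ) : ℂ) from rfl]
    push_cast
    rw [Complex.coe_algebraMap]
  have h3 : φ (mexp (t • A)) = (mexp (t • A)).map (algebraMap ℝ ℂ) := by
    ext i j
    simp [hφ, AlgHom.mapMatrix_apply, Algebra.ofId_apply, Matrix.map_apply]
  rw [← h3, mexp]
  exact h1.trans (by rw [h2]; rfl)

lemma exists_good_T (A : Matrix (Fin N) (Fin N) ℝ) (hA : IsHurwitz A) :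
    ∃ T : ℝ, 0 < T ∧ ∑ i, ∑ j, (mexp (T • A) i j) ^ 2 < 1 := by
  set A' := A.map (algebraMap ℝ ℂ) with hA'
  have hent : ∀ i j, Tendsto (fun t : ℝ => mexp (t • A) i j) atTop (nhds 0) := by
    intro i j
    have h1 := tendsto_cexp_mulVec A' hA (Pi.single j 1)
    have h2 := (tendsto_pi_nhds.mp h1 i)
    have h3 : Tendsto (fun t : ℝ => NormedSpace.exp ((t : ℂ) • A') i j) atTop (nhds 0) := by
      simp only [Pi.zero_apply] at h2
      refine h2.congr fun t => ?_
      simp [Matrix.mulVec_single]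
    have h4 := (Complex.continuous_re.tendsto 0).comp h3
    simp only [Complex.zero_re] at h4
    refine h4.congr fun t => ?_
    have := congrArg (fun M => (M i j).re) (mexp_map_complex A t)
    simpa [Matrix.map_apply, hA'] using this.symm
  have hsq : Tendsto (fun t : ℝ => ∑ i, ∑ j, (mexp (t • A) i j) ^ 2) atTop (nhds 0) := by
    have := tendsto_finset_sum (Finset.univ (α := Fin N)) (fun i _ =>
      tendsto_finset_sum (Finset.univ (α := Fin N)) (fun j _ => (hent i j).pow 2))
    simpa using this
  have hev : ∀ᶠ T : ℝ in atTop,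
      0 < T ∧ ∑ i, ∑ j, (mexp (T • A) i j) ^ 2 < 1 :=
    (eventually_gt_atTop 0).and (hsq.eventually_lt_const one_pos)
  exact hev.exists

lemma mulVec_sq_le (M : Matrix (Fin N) (Fin N) ℝ) (x : Fin N → ℝ) :
    (M *ᵥ x) ⬝ᵥ (M *ᵥ x) ≤ (∑ i, ∑ j, (M i j) ^ 2) * (x ⬝ᵥ x) := by
  have h1 : ∀ i : Fin N, (M *ᵥ x) i * (M *ᵥ x) i
      ≤ (∑ j, (M i j) ^ 2) * (∑ j, (x j) ^ 2) := by
    intro i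
    have := Finset.sum_mul_sq_le_sq_mul_sq Finset.univ (fun j => M i j) x
    calc (M *ᵥ x) i * (M *ᵥ x) i = (∑ j, M i j * x j) ^ 2 := by
          rw [← pow_two]; rfl
      _ ≤ _ := this
  have hxx : x ⬝ᵥ x = ∑ j, (x j) ^ 2 := by
    simp [dotProduct, pow_two]
  calc (M *ᵥ x) ⬝ᵥ (M *ᵥ x) = ∑ i, (M *ᵥ x) i * (M *ᵥ x) i := rfl
    _ ≤ ∑ i, (∑ j, (M i j) ^ 2) * (∑ j, (x j) ^ 2) := Finset.sum_le_sum fun i _ => h1 i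
    _ = (∑ i, ∑ j, (M i j) ^ 2) * (x ⬝ᵥ x) := by rw [hxx, ← Finset.sum_mul]

end Chunk4

lemma cont_dot {n m : ℕ} {f g : (Fin n → ℝ) → (Fin m → ℝ)}
    (hf : Continuous f) (hg : Continuous g) :
    Continuous fun x => f x ⬝ᵥ g x := by
  simp only [dotProduct]
  exact continuous_finset_sum _ fun i _ =>
    ((continuous_apply i).comp hf).mul ((continuous_apply i).comp hg)

lemma cont_mulVec {n m : ℕ} (M : Matrix (Fin m) (Fin n) ℝ) :
    Continuous fun x : Fin n → ℝ => M *ᵥ x := by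
  have h := LinearMap.continuous_of_finiteDimensional (Matrix.mulVecLin M)
  exact h

lemma dotProduct_self_nonneg' {n : ℕ} (x : Fin n → ℝ) : 0 ≤ x ⬝ᵥ x :=
  Finset.sum_nonneg fun i _ => mul_self_nonneg _

lemma vecMul_eq {n m : ℕ} (B : Matrix (Fin n) (Fin m) ℝ) (z : Fin n → ℝ) :
    z ᵥ* B = Bᵀ *ᵥ z := by
  rw [← Matrix.transpose_transpose B, Matrix.vecMul_transpose, Matrix.transpose_transpose]

set_option maxHeartbeats 2000000 in
theorem stmt15 {n m : ℕ}
    (A : Matrix (Fin n) (Fin n) ℝ) (B : Matrix (Fin n) (Fin m) ℝ)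
    (hstab : ∃ F : Matrix (Fin m) (Fin n) ℝ, IsHurwitz (A + B * F))
    (α : ℝ) (hα : α < 0)
    (Q : Matrix (Fin n) (Fin n) ℝ) (hQ : Q.PosSemidef) :
    ∃ P : Matrix (Fin n) (Fin n) ℝ, P.PosSemidef ∧
      NegDef (Aᵀ * P + P * A + α • (P * B * Bᵀ * P) + Q) := by
  rcases Nat.eq_zero_or_pos n with hn | hn
  · subst hn
    exact ⟨0, posSemidef_iff_dotProduct_mulVec.mpr ⟨Subsingleton.elim _ _, fun x => by simp⟩,
      posDef_iff_dotProduct_mulVec.mpr ⟨Subsingleton.elim _ _, fun x hx => absurd (Subsingleton.elim x 0) hx⟩⟩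
  obtain ⟨F, hF⟩ := hstab
  set Acl := A + B * F with hAcl
  obtain ⟨T, hT, hfrob⟩ := exists_good_T Acl hF
  set P0 := lyap Acl T with hP0
  have hP0sym : P0ᵀ = P0 := lyap_symm Acl T
  have hP0psd : ∀ x, 0 ≤ x ⬝ᵥ (P0 *ᵥ x) := fun x => lyap_quad_nonneg Acl hT.le x
  have hlyap : Aclᵀ * P0 + P0 * Acl = mexp (T • Aclᵀ) * mexp (T • Acl) - 1 := lyap_eq Acl T
  set E := mexp (T • Acl) with hE
  have hvecP0 : ∀ x : Fin n → ℝ, x ᵥ* P0 = P0 *ᵥ x := fun x => by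
    nth_rewrite 1 [← hP0sym]
    rw [Matrix.vecMul_transpose]
  have hquadE : ∀ x : Fin n → ℝ, x ⬝ᵥ ((Aclᵀ * P0 + P0 * Acl) *ᵥ x)
      = (E *ᵥ x) ⬝ᵥ (E *ᵥ x) - x ⬝ᵥ x := by
    intro x
    rw [hlyap, Matrix.sub_mulVec, dotProduct_sub, Matrix.one_mulVec, quad_g, hE]
  set den : (Fin n → ℝ) → ℝ := fun x => x ⬝ᵥ x - (E *ᵥ x) ⬝ᵥ (E *ᵥ x) with hden
  set num : (Fin n → ℝ) → ℝ := fun x =>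
    (-α)⁻¹ * ((F *ᵥ x) ⬝ᵥ (F *ᵥ x)) + x ⬝ᵥ (Q *ᵥ x) with hnum
  have hden_pos : ∀ x : Fin n → ℝ, x ≠ 0 → 0 < den x := by
    intro x hx
    have h1 := mulVec_sq_le E x
    have h2 : 0 < x ⬝ᵥ x :=
      lt_of_le_of_ne (dotProduct_self_nonneg' x)
        (fun h => hx (dotProduct_self_eq_zero.mp h.symm))
    have h3 : (E *ᵥ x) ⬝ᵥ (E *ᵥ x) < x ⬝ᵥ x := by nlinarith
    simpa [hden] using sub_pos.mpr h3
  have hnum_nonneg : ∀ x : Fin n → ℝ, 0 ≤ num x := by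
    intro x
    have h1 := dotProduct_self_nonneg' (F *ᵥ x)
    have h2 : 0 ≤ x ⬝ᵥ (Q *ᵥ x) := by simpa using hQ.dotProduct_mulVec_nonneg x
    have h3 : (0:ℝ) ≤ (-α)⁻¹ := inv_nonneg.mpr (by linarith)
    simp only [hnum]; positivity
  set S : Set (Fin n → ℝ) := {x | x ⬝ᵥ x = 1} with hS
  have hcont_dd : Continuous fun x : Fin n → ℝ => x ⬝ᵥ x :=
    cont_dot continuous_id continuous_id
  have hScomp : IsCompact S := by
    have hclosed : IsClosed S := isClosed_eq hcont_dd continuous_const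
    have hbdd : Bornology.IsBounded S := by
      refine (Metric.isBounded_closedBall (x := (0 : Fin n → ℝ)) (r := 1)).subset ?_
      intro x hx
      rw [Metric.mem_closedBall, dist_zero_right]
      refine (pi_norm_le_iff_of_nonneg zero_le_one).mpr fun i => ?_
      rw [Real.norm_eq_abs, abs_le_one_iff_mul_self_le_one]
      calc x i * x i ≤ ∑ j, x j * x j :=
            Finset.single_le_sum (fun j _ => mul_self_nonneg (x j)) (Finset.mem_univ i)
        _ = 1 := hx
    exact Metric.isCompact_of_isClosed_isBounded hclosed hbdd
  have hSne : S.Nonempty := by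
    have h1 : (Pi.single (⟨0, hn⟩ : Fin n) (1:ℝ)) ⬝ᵥ (Pi.single (⟨0, hn⟩ : Fin n) (1:ℝ)) = 1 := by
      simp [dotProduct, Pi.single_apply]
    exact ⟨_, h1⟩
  have hcontOn : ContinuousOn (fun x => num x / den x) S := by
    have h1 : Continuous num :=
      (continuous_const.mul (cont_dot (cont_mulVec F) (cont_mulVec F))).add
        (cont_dot continuous_id (cont_mulVec Q))
    have h2 : Continuous den :=
      hcont_dd.sub (cont_dot (cont_mulVec E) (cont_mulVec E))
    refine h1.continuousOn.div h2.continuousOn fun x hx => ?_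
    have hxne : x ≠ 0 := by
      intro h0; rw [hS] at hx; simp only [Set.mem_setOf_eq, h0] at hx
      simp at hx
    exact (hden_pos x hxne).ne'
  obtain ⟨x₀, hx₀S, hmax⟩ := hScomp.exists_isMaxOn hSne hcontOn
  obtain ⟨c, hc⟩ : ∃ c : ℝ, c = num x₀ / den x₀ + 1 := ⟨_, rfl⟩
  have hx₀ne : x₀ ≠ 0 := by
    intro h0; rw [hS] at hx₀S; simp only [Set.mem_setOf_eq, h0] at hx₀S
    simp at hx₀S
  have hc1 : 1 ≤ c := by
    have := div_nonneg (hnum_nonneg x₀) (hden_pos x₀ hx₀ne).le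
    rw [hc]; linarith
  have hc0 : 0 < c := by linarith
  have hQsym : Qᵀ = Q := by
    have := hQ.1
    rwa [Matrix.IsHermitian, conjTranspose_eq_transpose_of_trivial] at this
  -- the key unit-sphere inequality
  have key : ∀ y : Fin n → ℝ, y ⬝ᵥ y = 1 →
      y ⬝ᵥ ((Aᵀ * (c • P0) + (c • P0) * A + α • ((c • P0) * B * Bᵀ * (c • P0)) + Q) *ᵥ y)
        < 0 := by
    intro y hy1
    have hyne : y ≠ 0 := by
      intro h0; rw [h0] at hy1; simp at hy1
    have hT1 : y ⬝ᵥ ((Aᵀ * (c • P0)) *ᵥ y) = c * ((A *ᵥ y) ⬝ᵥ (P0 *ᵥ y)) := by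
      rw [← Matrix.mulVec_mulVec, Matrix.smul_mulVec, Matrix.mulVec_smul,
        dotProduct_smul, smul_eq_mul, Matrix.dotProduct_mulVec, Matrix.vecMul_transpose]
    have hT2 : y ⬝ᵥ (((c • P0) * A) *ᵥ y) = c * ((P0 *ᵥ y) ⬝ᵥ (A *ᵥ y)) := by
      rw [← Matrix.mulVec_mulVec, Matrix.smul_mulVec, dotProduct_smul, smul_eq_mul,
        Matrix.dotProduct_mulVec, hvecP0]
    have hmat : (c • P0) * B * Bᵀ * (c • P0) = (c * c) • (P0 * B * Bᵀ * P0) := by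
      simp [smul_mul_assoc, mul_smul_comm, smul_smul]
    have hq : y ⬝ᵥ ((P0 * B * Bᵀ * P0) *ᵥ y)
        = (Bᵀ *ᵥ (P0 *ᵥ y)) ⬝ᵥ (Bᵀ *ᵥ (P0 *ᵥ y)) := by
      rw [← Matrix.mulVec_mulVec, ← Matrix.mulVec_mulVec, ← Matrix.mulVec_mulVec,
        Matrix.dotProduct_mulVec, hvecP0, Matrix.dotProduct_mulVec, vecMul_eq]
    have hT3 : y ⬝ᵥ ((α • ((c • P0) * B * Bᵀ * (c • P0))) *ᵥ y)
        = α * c ^ 2 * ((Bᵀ *ᵥ (P0 *ᵥ y)) ⬝ᵥ (Bᵀ *ᵥ (P0 *ᵥ y))) := by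
      rw [hmat, Matrix.smul_mulVec, Matrix.smul_mulVec, dotProduct_smul,
        dotProduct_smul, smul_eq_mul, smul_eq_mul, hq]
      ring
    have hAy : A *ᵥ y = Acl *ᵥ y - B *ᵥ (F *ᵥ y) := by
      rw [hAcl, Matrix.add_mulVec, ← Matrix.mulVec_mulVec, add_sub_cancel_right]
    have hBv : ∀ w : Fin m → ℝ, (P0 *ᵥ y) ⬝ᵥ (B *ᵥ w) = (Bᵀ *ᵥ (P0 *ᵥ y)) ⬝ᵥ w := by
      intro w
      rw [Matrix.dotProduct_mulVec, vecMul_eq]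
    have hT4 : (A *ᵥ y) ⬝ᵥ (P0 *ᵥ y)
        = (Acl *ᵥ y) ⬝ᵥ (P0 *ᵥ y) - (Bᵀ *ᵥ (P0 *ᵥ y)) ⬝ᵥ (F *ᵥ y) := by
      rw [hAy, sub_dotProduct]
      congr 1
      rw [dotProduct_comm, hBv]
    have hT5 : (P0 *ᵥ y) ⬝ᵥ (A *ᵥ y)
        = (P0 *ᵥ y) ⬝ᵥ (Acl *ᵥ y) - (Bᵀ *ᵥ (P0 *ᵥ y)) ⬝ᵥ (F *ᵥ y) := by
      rw [hAy, dotProduct_sub, hBv]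
    have hT6 : y ⬝ᵥ ((Aclᵀ * P0 + P0 * Acl) *ᵥ y)
        = (Acl *ᵥ y) ⬝ᵥ (P0 *ᵥ y) + (P0 *ᵥ y) ⬝ᵥ (Acl *ᵥ y) := by
      rw [Matrix.add_mulVec, dotProduct_add]
      congr 1
      · rw [← Matrix.mulVec_mulVec, Matrix.dotProduct_mulVec, Matrix.vecMul_transpose]
      · rw [← Matrix.mulVec_mulVec, Matrix.dotProduct_mulVec, hvecP0]
    -- expansion of the quadratic form
    have hexp : y ⬝ᵥ ((Aᵀ * (c • P0) + (c • P0) * A + α • ((c • P0) * B * Bᵀ * (c • P0)) + Q) *ᵥ y)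
        = c * (y ⬝ᵥ ((Aclᵀ * P0 + P0 * Acl) *ᵥ y))
          - 2 * c * ((Bᵀ *ᵥ (P0 *ᵥ y)) ⬝ᵥ (F *ᵥ y))
          + α * c ^ 2 * ((Bᵀ *ᵥ (P0 *ᵥ y)) ⬝ᵥ (Bᵀ *ᵥ (P0 *ᵥ y)))
          + y ⬝ᵥ (Q *ᵥ y) := by
      rw [Matrix.add_mulVec, Matrix.add_mulVec, Matrix.add_mulVec, dotProduct_add,
        dotProduct_add, dotProduct_add, hT1, hT2, hT3, hT4, hT5, hT6]
      ring
    -- AM-GM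
    have hAM : α * c ^ 2 * ((Bᵀ *ᵥ (P0 *ᵥ y)) ⬝ᵥ (Bᵀ *ᵥ (P0 *ᵥ y)))
        - 2 * c * ((Bᵀ *ᵥ (P0 *ᵥ y)) ⬝ᵥ (F *ᵥ y))
        ≤ (-α)⁻¹ * ((F *ᵥ y) ⬝ᵥ (F *ᵥ y)) := by
      set u := Bᵀ *ᵥ (P0 *ᵥ y) with hu
      set v := F *ᵥ y with hv
      have key0 := dotProduct_self_nonneg' (((-α) * c) • u + v)
      have hexp0 : (((-α) * c) • u + v) ⬝ᵥ (((-α) * c) • u + v)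
          = α ^ 2 * c ^ 2 * (u ⬝ᵥ u) + 2 * ((-α) * c) * (u ⬝ᵥ v) + v ⬝ᵥ v := by
        simp only [dotProduct_add, add_dotProduct, smul_dotProduct, dotProduct_smul,
          smul_eq_mul]
        rw [dotProduct_comm v u]
        ring
      rw [hexp0] at key0
      have hαpos : (0:ℝ) < -α := by linarith
      have h5 := mul_nonneg (inv_nonneg.mpr hαpos.le) key0
      have h6 : (-α)⁻¹ * (α ^ 2 * c ^ 2 * (u ⬝ᵥ u) + 2 * ((-α) * c) * (u ⬝ᵥ v) + v ⬝ᵥ v)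
          = (-α) * c ^ 2 * (u ⬝ᵥ u) + 2 * c * (u ⬝ᵥ v) + (-α)⁻¹ * (v ⬝ᵥ v) := by
        have hα0 : α ≠ 0 := ne_of_lt hα
        field_simp
        ring
      rw [h6] at h5
      linarith
    have hDy : y ⬝ᵥ ((Aclᵀ * P0 + P0 * Acl) *ᵥ y) = -(den y) := by
      have hdd : den y = y ⬝ᵥ y - (E *ᵥ y) ⬝ᵥ (E *ᵥ y) := rfl
      rw [hquadE y, hdd]; ring
    have hyS : y ∈ S := hy1
    have h7 : num y / den y ≤ num x₀ / den x₀ := hmax hyS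
    have h8 : num y ≤ (num x₀ / den x₀) * den y :=
      (div_le_iff₀ (hden_pos y hyne)).mp h7
    have hdp := hden_pos y hyne
    have hnumy : num y = (-α)⁻¹ * ((F *ᵥ y) ⬝ᵥ (F *ᵥ y)) + y ⬝ᵥ (Q *ᵥ y) := rfl
    rw [hexp, hDy]
    have hcden : c * den y = (num x₀ / den x₀) * den y + den y := by
      rw [hc]; ring
    have hnn := hnum_nonneg y
    rw [hnumy] at hnn h8
    clear_value den num E P0 Acl S
    linarith [hAM, h8, hdp]
  refine ⟨c • P0, posSemidef_iff_dotProduct_mulVec.mpr ⟨?_, ?_⟩,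
    posDef_iff_dotProduct_mulVec.mpr ⟨?_, ?_⟩⟩
  · rw [Matrix.IsHermitian, conjTranspose_eq_transpose_of_trivial, transpose_smul, hP0sym]
  · intro x
    have h := hP0psd x
    simp only [star_trivial, Matrix.smul_mulVec, dotProduct_smul, smul_eq_mul]
    positivity
  · rw [Matrix.IsHermitian, conjTranspose_eq_transpose_of_trivial, transpose_neg]
    congr 1
    simp only [transpose_add, transpose_mul, transpose_smul, transpose_transpose,
      hP0sym, hQsym, Matrix.mul_assoc]
    abel
  · intro x hx
    have hxx : 0 < x ⬝ᵥ x :=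
      lt_of_le_of_ne (dotProduct_self_nonneg' x)
        (fun h => hx (dotProduct_self_eq_zero.mp h.symm))
    set r := Real.sqrt (x ⬝ᵥ x) with hr
    have hrpos : 0 < r := Real.sqrt_pos.mpr hxx
    set y := r⁻¹ • x with hy
    have hy1 : y ⬝ᵥ y = 1 := by
      simp only [hy, smul_dotProduct, dotProduct_smul, smul_eq_mul]
      rw [show x ⬝ᵥ x = r * r from (Real.mul_self_sqrt hxx.le).symm]
      field_simp
    have hxy : x = r • y := by
      rw [hy, smul_smul, mul_inv_cancel₀ hrpos.ne', one_smul]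
    have hscale : x ⬝ᵥ ((Aᵀ * (c • P0) + (c • P0) * A + α • ((c • P0) * B * Bᵀ * (c • P0)) + Q) *ᵥ x)
        = r ^ 2 * (y ⬝ᵥ ((Aᵀ * (c • P0) + (c • P0) * A + α • ((c • P0) * B * Bᵀ * (c • P0)) + Q) *ᵥ y)) := by
      rw [hxy, Matrix.mulVec_smul, smul_dotProduct, dotProduct_smul, smul_eq_mul, smul_eq_mul]
      ring
    simp only [star_trivial, Matrix.neg_mulVec, dotProduct_neg]
    rw [neg_pos, hscale]
    exact mul_neg_of_pos_of_neg (by positivity) (key y hy1)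
end
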